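/- arXiv:2603.00927 — 3 statements merged into one kernel-verified Lean document; each statement's English description precedes it below -/
import Mathlib

section
/- Let Σ be a d×d symmetric positive definite matrix and let Z ~ N_d(0, Σ). Then for every ε > √(tr Σ), P(‖Z‖ > ε) ≤ exp(−(1/2)(ε − √(tr Σ))² ‖Σ‖_op⁻¹). -/
open MeasureTheory Matrix

set_option synthInstance.maxHeartbeats 1000000
set_option maxHeartbeats 2000000

noncomputable section

/-- Gaussian measure `N(m, S)` on `EuclideanSpace ℝ ι`, defined through its Lebesgue density
`(2π)^{-d/2} det(S)^{-1/2} exp(-(1/2) (x-m)ᵀ S⁻¹ (x-m))`. -/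
def gaussianMeasure {ι : Type*} [Fintype ι] [DecidableEq ι]
    (m : EuclideanSpace ℝ ι) (S : Matrix ι ι ℝ) : Measure (EuclideanSpace ℝ ι) :=
  volume.withDensity fun x =>
    ENNReal.ofReal ((Real.sqrt ((2 * Real.pi) ^ Fintype.card ι * S.det))⁻¹ *
      Real.exp (-(1 / 2) * (inner ℝ (x - m) ((Matrix.toEuclideanCLM (𝕜 := ℝ) S⁻¹) (x - m)) : ℝ)))

/-- Operator (spectral) norm of a matrix. -/
def matOpNorm {ι : Type*} [Fintype ι] [DecidableEq ι] (M : Matrix ι ι ℝ) : ℝ :=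
  ‖Matrix.toEuclideanCLM (𝕜 := ℝ) M‖

namespace GaussianAux

open Real

lemma sqrt_prod {ι : Type*} [Fintype ι] (f : ι → ℝ) (hf : ∀ i, 0 ≤ f i) :
    Real.sqrt (∏ i, f i) = ∏ i, Real.sqrt (f i) := by
  classical
  induction (Finset.univ : Finset ι) using Finset.cons_induction with
  | empty => simp
  | cons a t ha ih =>
    rw [Finset.prod_cons, Finset.prod_cons, Real.sqrt_mul (hf a), ih]

variable {d : ℕ} {S : Matrix (Fin d) (Fin d) ℝ} (hS : S.PosDef)

lemma clm_inv_eigen (j : Fin d) :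
    Matrix.toEuclideanCLM (𝕜 := ℝ) S⁻¹ (hS.1.eigenvectorBasis j) =
      (hS.1.eigenvalues j)⁻¹ • hS.1.eigenvectorBasis j := by
  have hdet : IsUnit S.det := isUnit_iff_ne_zero.mpr hS.det_pos.ne'
  have hmv := hS.1.mulVec_eigenvectorBasis j
  have hpos := hS.eigenvalues_pos j
  have h2 : S⁻¹ *ᵥ ⇑(hS.1.eigenvectorBasis j)
      = (hS.1.eigenvalues j)⁻¹ • ⇑(hS.1.eigenvectorBasis j) := by
    have h3 : S⁻¹ *ᵥ (S *ᵥ ⇑(hS.1.eigenvectorBasis j)) = ⇑(hS.1.eigenvectorBasis j) := by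
      rw [mulVec_mulVec, Matrix.nonsing_inv_mul S hdet, one_mulVec]
    rw [hmv, mulVec_smul] at h3
    rw [eq_inv_smul_iff₀ hpos.ne', h3]
  exact congrArg (WithLp.toLp 2) h2

lemma clm_eigen (j : Fin d) :
    Matrix.toEuclideanCLM (𝕜 := ℝ) S (hS.1.eigenvectorBasis j) =
      hS.1.eigenvalues j • hS.1.eigenvectorBasis j := by
  exact congrArg (WithLp.toLp 2) (hS.1.mulVec_eigenvectorBasis j)

lemma quad_form (y : EuclideanSpace ℝ (Fin d)) :
    (inner ℝ ((hS.1.eigenvectorBasis.repr.symm y))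
      (Matrix.toEuclideanCLM (𝕜 := ℝ) S⁻¹ (hS.1.eigenvectorBasis.repr.symm y)) : ℝ) =
      ∑ i, (hS.1.eigenvalues i)⁻¹ * (y i)^2 := by
  set b := hS.1.eigenvectorBasis with hbdef
  have hb : ∀ j, Matrix.toEuclideanCLM (𝕜 := ℝ) S⁻¹ (b j) = (hS.1.eigenvalues j)⁻¹ • b j :=
    clm_inv_eigen hS
  set x := b.repr.symm y with hxdef
  have hx : x = ∑ i, y i • b i := (b.sum_repr_symm y).symm
  have hCx : Matrix.toEuclideanCLM (𝕜 := ℝ) S⁻¹ x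
      = ∑ i, ((hS.1.eigenvalues i)⁻¹ * y i) • b i := by
    rw [hx, map_sum]
    refine Finset.sum_congr rfl fun i _ => ?_
    rw [_root_.map_smul, hb i, smul_smul, mul_comm]
  have hxb : ∀ i, (inner ℝ x (b i) : ℝ) = y i := fun i => by
    rw [real_inner_comm, ← b.repr_apply_apply, hxdef, LinearIsometryEquiv.apply_symm_apply]
  rw [hCx, inner_sum]
  refine Finset.sum_congr rfl fun i _ => ?_
  rw [real_inner_smul_right, hxb i]; ring

lemma trace_eq : S.trace = ∑ i, hS.1.eigenvalues i := by
  simpa using hS.1.trace_eq_sum_eigenvalues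

lemma eig_le_opNorm (i : Fin d) : hS.1.eigenvalues i ≤ matOpNorm S := by
  have h1 := clm_eigen hS i
  have h2 := (Matrix.toEuclideanCLM (𝕜 := ℝ) S).le_opNorm (hS.1.eigenvectorBasis i)
  rw [h1, norm_smul, hS.1.eigenvectorBasis.orthonormal.1 i] at h2
  simp only [mul_one, Real.norm_eq_abs] at h2
  exact le_trans (le_abs_self _) h2

lemma pi_lintegral (a : Fin d → ℝ) (ha : ∀ i, 0 < a i) :
    ∫⁻ (x : EuclideanSpace ℝ (Fin d)), ENNReal.ofReal (Real.exp (∑ i, -(a i) * (x i)^2))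
      = ENNReal.ofReal (∏ i, Real.sqrt (π / a i)) := by
  have hmeas : Measurable fun x : EuclideanSpace ℝ (Fin d) =>
      ENNReal.ofReal (Real.exp (∑ i, -(a i) * (x i)^2)) := by
    fun_prop
  rw [← ((EuclideanSpace.volume_preserving_symm_measurableEquiv_toLp (Fin d)).symm _).lintegral_comp hmeas]
  have hint : Integrable (fun y : Fin d → ℝ => ∏ i, Real.exp (-(a i) * (y i)^2)) :=
    Integrable.fintype_prod_dep fun i => integrable_exp_neg_mul_sq (ha i)
  have hnn : 0 ≤ᵐ[volume] fun y : Fin d → ℝ => ∏ i, Real.exp (-(a i) * (y i)^2) := by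
    filter_upwards with y using Finset.prod_nonneg fun i _ => (Real.exp_pos _).le
  calc ∫⁻ (y : Fin d → ℝ), ENNReal.ofReal
        (Real.exp (∑ i, -(a i) * (((MeasurableEquiv.toLp 2 (Fin d → ℝ)).symm.symm y) i)^2))
      = ∫⁻ (y : Fin d → ℝ), ENNReal.ofReal (∏ i, Real.exp (-(a i) * (y i)^2)) := by
        refine lintegral_congr fun y => ?_
        rw [← Real.exp_sum]
        rfl
    _ = ENNReal.ofReal (∫ y : Fin d → ℝ, ∏ i, Real.exp (-(a i) * (y i)^2)) :=
        (MeasureTheory.ofReal_integral_eq_lintegral_ofReal hint hnn).symm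
    _ = ENNReal.ofReal (∏ i, Real.sqrt (π / a i)) := by
        rw [MeasureTheory.integral_fintype_prod_volume_eq_prod
          (f := fun (i : Fin d) (t : ℝ) => Real.exp (-(a i) * t^2))]
        congr 1
        exact Finset.prod_congr rfl fun i _ => integral_gaussian (a i)

lemma mgf (s : ℝ) (hs : ∀ i, 0 < (2 * hS.1.eigenvalues i)⁻¹ - s) :
    ∫⁻ (x : EuclideanSpace ℝ (Fin d)), ENNReal.ofReal
        (Real.exp (s * ‖x‖^2 + -(1/2) * (inner ℝ x (Matrix.toEuclideanCLM (𝕜 := ℝ) S⁻¹ x) : ℝ)))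
      = ENNReal.ofReal (∏ i, Real.sqrt (π / ((2 * hS.1.eigenvalues i)⁻¹ - s))) := by
  set b := hS.1.eigenvectorBasis with hbdef
  have hcont : Continuous fun x : EuclideanSpace ℝ (Fin d) =>
      (inner ℝ x (Matrix.toEuclideanCLM (𝕜 := ℝ) S⁻¹ x) : ℝ) :=
    continuous_id.inner (Matrix.toEuclideanCLM (𝕜 := ℝ) S⁻¹).continuous
  have hmeas : Measurable fun x : EuclideanSpace ℝ (Fin d) => ENNReal.ofReal
      (Real.exp (s * ‖x‖^2 + -(1/2) * (inner ℝ x (Matrix.toEuclideanCLM (𝕜 := ℝ) S⁻¹ x) : ℝ))) :=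
    (((continuous_const.mul ((continuous_norm).pow 2)).add
      (continuous_const.mul hcont)).rexp.measurable).ennreal_ofReal
  rw [← (b.measurePreserving_repr_symm).lintegral_comp hmeas]
  have hpt : ∀ y : EuclideanSpace ℝ (Fin d),
      s * ‖b.repr.symm y‖^2 + -(1/2) * (inner ℝ (b.repr.symm y)
        (Matrix.toEuclideanCLM (𝕜 := ℝ) S⁻¹ (b.repr.symm y)) : ℝ)
      = ∑ i, -((2 * hS.1.eigenvalues i)⁻¹ - s) * (y i)^2 := by
    intro y
    rw [LinearIsometryEquiv.norm_map, quad_form hS y, PiLp.norm_sq_eq_of_L2,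
      Finset.mul_sum, Finset.mul_sum, ← Finset.sum_add_distrib]
    refine Finset.sum_congr rfl fun i _ => ?_
    have hne : hS.1.eigenvalues i ≠ 0 := (hS.eigenvalues_pos i).ne'
    rw [Real.norm_eq_abs, sq_abs]
    field_simp
    ring
  calc ∫⁻ (y : EuclideanSpace ℝ (Fin d)), ENNReal.ofReal
        (Real.exp (s * ‖b.repr.symm y‖^2 + -(1/2) * (inner ℝ (b.repr.symm y)
          (Matrix.toEuclideanCLM (𝕜 := ℝ) S⁻¹ (b.repr.symm y)) : ℝ)))
      = ∫⁻ (y : EuclideanSpace ℝ (Fin d)), ENNReal.ofReal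
          (Real.exp (∑ i, -((2 * hS.1.eigenvalues i)⁻¹ - s) * (y i)^2)) := by
        exact lintegral_congr fun y => by rw [hpt y]
    _ = ENNReal.ofReal (∏ i, Real.sqrt (π / ((2 * hS.1.eigenvalues i)⁻¹ - s))) :=
        pi_lintegral (fun i => (2 * hS.1.eigenvalues i)⁻¹ - s) hs

end GaussianAux

open GaussianAux Real ENNReal in
theorem stmt2 (d : ℕ) (S : Matrix (Fin d) (Fin d) ℝ) (hS : S.PosDef) :
    ∀ ε : ℝ, Real.sqrt S.trace < ε →
      (gaussianMeasure 0 S {x | ε < ‖x‖}).toReal ≤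
        Real.exp (-(1 / 2) * (ε - Real.sqrt S.trace) ^ 2 * (matOpNorm S)⁻¹) := by
  intro ε hε
  by_cases hd : d = 0
  · subst hd
    have htr0 : S.trace = 0 := by simp [Matrix.trace]
    have hε0 : 0 < ε := by rw [htr0, Real.sqrt_zero] at hε; exact hε
    have hempty : {x : EuclideanSpace ℝ (Fin 0) | ε < ‖x‖} = ∅ := by
      ext x
      have : x = 0 := Subsingleton.elim x 0
      simp [this, not_lt, hε0.le]
    rw [hempty]
    simp only [measure_empty, ENNReal.toReal_zero]
    exact (Real.exp_pos _).le
  · have hd1 : 0 < d := Nat.pos_of_ne_zero hd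
    haveI : Nonempty (Fin d) := ⟨⟨0, hd1⟩⟩
    set lam := hS.1.eigenvalues with hlamdef
    have hlam : ∀ i, 0 < lam i := fun i => hS.eigenvalues_pos i
    set M := matOpNorm S with hMdef
    have heig : ∀ i, lam i ≤ M := fun i => eig_le_opNorm hS i
    have hM : 0 < M := lt_of_lt_of_le (hlam (Classical.arbitrary _)) (heig _)
    have htr : S.trace = ∑ i, lam i := trace_eq hS
    have htrpos : 0 < S.trace := by
      rw [htr]; exact Finset.sum_pos (fun i _ => hlam i) Finset.univ_nonempty
    set r := Real.sqrt S.trace with hrdef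
    have hr : 0 < r := Real.sqrt_pos.mpr htrpos
    have hrr : r * r = S.trace := Real.mul_self_sqrt htrpos.le
    have hε0 : 0 < ε := lt_trans hr hε
    set s := (ε - r) / (2 * M * ε) with hsdef
    have hs0 : 0 < s := div_pos (by linarith) (by positivity)
    have h2sM : 1 - 2 * s * M = r / ε := by
      rw [hsdef]; field_simp; ring
    have h2sM1 : 2 * s * M < 1 := by
      have : 0 < r / ε := div_pos hr hε0
      linarith
    have hsl : ∀ i, 2 * s * lam i < 1 := fun i =>
      lt_of_le_of_lt (mul_le_mul_of_nonneg_left (heig i) (by positivity)) h2sM1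
    have ha' : ∀ i, (2 * lam i)⁻¹ - s = (1 - 2 * s * lam i) / (2 * lam i) := fun i => by
      have := (hlam i).ne'
      field_simp
    have ha : ∀ i, 0 < (2 * lam i)⁻¹ - s := fun i => by
      rw [ha' i]
      exact div_pos (by linarith [hsl i]) (by have := hlam i; positivity)
    have hdet : S.det = ∏ i, lam i := by
      simpa using hS.1.det_eq_prod_eigenvalues
    -- the measurable set
    set A := {x : EuclideanSpace ℝ (Fin d) | ε < ‖x‖} with hAdef
    have hAm : MeasurableSet A := measurableSet_lt measurable_const measurable_norm
    set c := (Real.sqrt ((2 * π) ^ d * S.det))⁻¹ with hcdef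
    have hc0 : 0 < c := by
      rw [hcdef]
      have : 0 < (2 * π) ^ d * S.det := mul_pos (by positivity) hS.det_pos
      positivity
    set f : EuclideanSpace ℝ (Fin d) → ℝ≥0∞ := fun x =>
      ENNReal.ofReal (c * Real.exp (-(1/2) *
        (inner ℝ x (Matrix.toEuclideanCLM (𝕜 := ℝ) S⁻¹ x) : ℝ))) with hfdef
    have hgm : gaussianMeasure 0 S = volume.withDensity f := by
      unfold gaussianMeasure
      congr 1
      funext x
      rw [sub_zero]
      simp [hfdef, hcdef, Fintype.card_fin]
    set F : EuclideanSpace ℝ (Fin d) → ℝ≥0∞ := fun x =>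
      ENNReal.ofReal (Real.exp (s * ‖x‖^2 + -(1/2) *
        (inner ℝ x (Matrix.toEuclideanCLM (𝕜 := ℝ) S⁻¹ x) : ℝ))) with hFdef
    have hcont : Continuous fun x : EuclideanSpace ℝ (Fin d) =>
        (inner ℝ x (Matrix.toEuclideanCLM (𝕜 := ℝ) S⁻¹ x) : ℝ) :=
      continuous_id.inner (Matrix.toEuclideanCLM (𝕜 := ℝ) S⁻¹).continuous
    have hFmeas : Measurable F :=
      (((continuous_const.mul ((continuous_norm).pow 2)).add
        (continuous_const.mul hcont)).rexp.measurable).ennreal_ofReal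
    have hMGF := mgf hS s (fun i => ha i)
    -- pointwise bound on A
    have hpt : ∀ x ∈ A, f x ≤ ENNReal.ofReal (Real.exp (-(s * ε^2)) * c) * F x := by
      intro x hx
      have hx' : ε < ‖x‖ := hx
      have hxx : s * ε^2 ≤ s * ‖x‖^2 := by
        have : ε^2 ≤ ‖x‖^2 := by nlinarith [hx', hε0]
        nlinarith [hs0.le, this]
      rw [hfdef, hFdef, ← ENNReal.ofReal_mul (by positivity)]
      apply ENNReal.ofReal_le_ofReal
      set E := (inner ℝ x (Matrix.toEuclideanCLM (𝕜 := ℝ) S⁻¹ x) : ℝ)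
      have key : Real.exp (-(s * ε^2)) * c * Real.exp (s * ‖x‖^2 + -(1/2) * E)
          = (Real.exp (s * ‖x‖^2 - s * ε^2)) * (c * Real.exp (-(1/2) * E)) := by
        calc Real.exp (-(s * ε^2)) * c * Real.exp (s * ‖x‖^2 + -(1/2) * E)
            = Real.exp (-(s * ε^2)) * Real.exp (s * ‖x‖^2 + -(1/2) * E) * c := by ring
          _ = Real.exp (-(s * ε^2) + (s * ‖x‖^2 + -(1/2) * E)) * c := by rw [← Real.exp_add]
          _ = Real.exp ((s * ‖x‖^2 - s * ε^2) + -(1/2) * E) * c := by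
              rw [show -(s * ε^2) + (s * ‖x‖^2 + -(1/2) * E)
                = (s * ‖x‖^2 - s * ε^2) + -(1/2) * E from by ring]
          _ = Real.exp (s * ‖x‖^2 - s * ε^2) * Real.exp (-(1/2) * E) * c := by
              rw [Real.exp_add]
          _ = (Real.exp (s * ‖x‖^2 - s * ε^2)) * (c * Real.exp (-(1/2) * E)) := by ring
      rw [key]
      have h1 : (1:ℝ) ≤ Real.exp (s * ‖x‖^2 - s * ε^2) :=
        Real.one_le_exp (by linarith)
      nlinarith [Real.exp_pos (-(1/2) * E), hc0, h1, mul_pos hc0 (Real.exp_pos (-(1/2) * E))]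
    -- chain of inequalities in ℝ≥0∞
    have chain : gaussianMeasure 0 S A ≤
        ENNReal.ofReal ((Real.exp (-(s * ε^2)) * c) *
          ∏ i, Real.sqrt (π / ((2 * lam i)⁻¹ - s))) := by
      calc gaussianMeasure 0 S A = ∫⁻ x in A, f x := by
            rw [hgm, withDensity_apply _ hAm]
        _ ≤ ∫⁻ x in A, ENNReal.ofReal (Real.exp (-(s * ε^2)) * c) * F x :=
            setLIntegral_mono (by fun_prop (disch := exact hFmeas)) hpt
        _ ≤ ∫⁻ x, ENNReal.ofReal (Real.exp (-(s * ε^2)) * c) * F x :=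
            setLIntegral_le_lintegral _ _
        _ = ENNReal.ofReal (Real.exp (-(s * ε^2)) * c) * ∫⁻ x, F x :=
            lintegral_const_mul' _ _ ENNReal.ofReal_ne_top
        _ = ENNReal.ofReal (Real.exp (-(s * ε^2)) * c) *
            ENNReal.ofReal (∏ i, Real.sqrt (π / ((2 * lam i)⁻¹ - s))) := by rw [hFdef, hMGF]
        _ = ENNReal.ofReal ((Real.exp (-(s * ε^2)) * c) *
            ∏ i, Real.sqrt (π / ((2 * lam i)⁻¹ - s))) := by
            rw [← ENNReal.ofReal_mul (by positivity)]
    -- real-number estimates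
    have h1m : 0 < 1 - 2 * s * M := by rw [h2sM]; exact div_pos hr hε0
    have hprod : c * ∏ i, Real.sqrt (π / ((2 * lam i)⁻¹ - s))
        = ∏ i, Real.sqrt ((1 - 2 * s * lam i)⁻¹) := by
      have hprod0 : (2 * π) ^ d * ∏ i, lam i = ∏ i, (2 * π * lam i) := by
        rw [Finset.prod_mul_distrib, Finset.prod_const, Finset.card_univ, Fintype.card_fin]
      have hc2 : c = ∏ i, (Real.sqrt (2 * π * lam i))⁻¹ := by
        rw [hcdef, hdet, hprod0, sqrt_prod (fun i => 2 * π * lam i)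
          (fun i => by have := (hlam i).le; positivity), Finset.prod_inv_distrib]
      rw [hc2, ← Finset.prod_mul_distrib]
      refine Finset.prod_congr rfl fun i _ => ?_
      have h1 : (0:ℝ) < lam i := hlam i
      have h2 : (0:ℝ) < 1 - 2 * s * lam i := by linarith [hsl i]
      have h3 : (0:ℝ) < π := Real.pi_pos
      have harg : (2 * π * lam i)⁻¹ * (π / ((2 * lam i)⁻¹ - s)) = (1 - 2 * s * lam i)⁻¹ := by
        have h1' := h1.ne'
        have h2' := h2.ne'
        have h3' := h3.ne'
        have hone : (2 * π * lam i)⁻¹ * (π * (2 * lam i)) = 1 := by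
          field_simp
        rw [ha' i, div_div_eq_mul_div, div_eq_mul_inv, ← mul_assoc, hone, one_mul]
      rw [← Real.sqrt_inv, ← Real.sqrt_mul (by positivity), harg]
    have hfac : ∀ i, Real.sqrt ((1 - 2 * s * lam i)⁻¹) ≤ Real.exp (s * lam i / (1 - 2 * s * M)) := by
      intro i
      have ht0 : 0 ≤ 2 * s * lam i := le_of_lt (mul_pos (mul_pos two_pos hs0) (hlam i))
      have htc : 2 * s * lam i ≤ 2 * s * M :=
        mul_le_mul_of_nonneg_left (heig i) (le_of_lt (mul_pos two_pos hs0))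
      have ht1 : 0 < 1 - 2 * s * lam i := by linarith [hsl i]
      have e1 : (1 - 2 * s * lam i)⁻¹ = 1 + (2 * s * lam i) / (1 - 2 * s * lam i) := by
        field_simp
        ring
      have e2 : (2 * s * lam i) / (1 - 2 * s * lam i) ≤ (2 * s * lam i) / (1 - 2 * s * M) :=
        div_le_div_of_nonneg_left ht0 h1m (by linarith)
      have e3 : (1 - 2 * s * lam i)⁻¹ ≤ Real.exp ((2 * s * lam i) / (1 - 2 * s * M)) := by
        have := Real.add_one_le_exp ((2 * s * lam i) / (1 - 2 * s * M))
        rw [e1]; linarith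
      calc Real.sqrt ((1 - 2 * s * lam i)⁻¹)
          ≤ Real.sqrt (Real.exp ((2 * s * lam i) / (1 - 2 * s * M))) := Real.sqrt_le_sqrt e3
        _ = Real.exp ((2 * s * lam i) / (1 - 2 * s * M) / 2) := (Real.exp_half _).symm
        _ = Real.exp (s * lam i / (1 - 2 * s * M)) := by congr 1; ring
    have hbound : ∏ i, Real.sqrt ((1 - 2 * s * lam i)⁻¹)
        ≤ Real.exp (s * S.trace / (1 - 2 * s * M)) := by
      calc ∏ i, Real.sqrt ((1 - 2 * s * lam i)⁻¹)
          ≤ ∏ i, Real.exp (s * lam i / (1 - 2 * s * M)) :=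
            Finset.prod_le_prod (fun i _ => Real.sqrt_nonneg _) (fun i _ => hfac i)
        _ = Real.exp (∑ i, s * lam i / (1 - 2 * s * M)) := (Real.exp_sum _ _).symm
        _ = Real.exp (s * S.trace / (1 - 2 * s * M)) := by
            congr 1
            rw [htr, Finset.mul_sum, Finset.sum_div]
    have hexp : -(s * ε^2) + s * S.trace / (1 - 2 * s * M)
        = -(1 / 2) * (ε - r) ^ 2 * M⁻¹ := by
      rw [h2sM, hsdef, ← hrr]
      field_simp
      ring
    have hreal : (Real.exp (-(s * ε^2)) * c) * ∏ i, Real.sqrt (π / ((2 * lam i)⁻¹ - s))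
        ≤ Real.exp (-(1 / 2) * (ε - r) ^ 2 * M⁻¹) := by
      calc (Real.exp (-(s * ε^2)) * c) * ∏ i, Real.sqrt (π / ((2 * lam i)⁻¹ - s))
          = Real.exp (-(s * ε^2)) * (c * ∏ i, Real.sqrt (π / ((2 * lam i)⁻¹ - s))) := by ring
        _ = Real.exp (-(s * ε^2)) * ∏ i, Real.sqrt ((1 - 2 * s * lam i)⁻¹) := by rw [hprod]
        _ ≤ Real.exp (-(s * ε^2)) * Real.exp (s * S.trace / (1 - 2 * s * M)) :=
            mul_le_mul_of_nonneg_left hbound (Real.exp_pos _).le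
        _ = Real.exp (-(s * ε^2) + s * S.trace / (1 - 2 * s * M)) := (Real.exp_add _ _).symm
        _ = Real.exp (-(1 / 2) * (ε - r) ^ 2 * M⁻¹) := by rw [hexp]
    exact ENNReal.toReal_le_of_le_ofReal (Real.exp_pos _).le
      (le_trans chain (ENNReal.ofReal_le_ofReal hreal))
end
end

section
/- Let m, u ≥ 1, let g(A) := log det(I_u + AᵀA) for A ∈ ℝ^{m×u}, and write J(A) := (I_u + AᵀA)^{−1}. Then for all A, U ∈ ℝ^{m×u}, the directional derivative of the gradient map satisfies ‖D(∇g)(A)[U]‖_F = ‖2 U J(A) − 2 A J(A)(AᵀU + UᵀA) J(A)‖_F ≤ (2 + 4‖A‖_F²)‖U‖_F. In particular, the operator norm of the Hessian of g at A (viewed as a linear map on ℝ^{m×u} with the Frobenius norm, equivalently the Hessian with respect to vec(A)) is at most 2 + 4‖A‖_F². -/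
open Matrix

noncomputable section

/-- Frobenius norm of a matrix. -/
def frobNorm {m u : ℕ} (M : Matrix (Fin m) (Fin u) ℝ) : ℝ :=
  Real.sqrt (∑ i, ∑ j, M i j ^ 2)

attribute [local instance] Matrix.frobeniusSeminormedAddCommGroup Matrix.frobeniusNormedSpace

lemma frobNorm_eq {a b : ℕ} (M : Matrix (Fin a) (Fin b) ℝ) : frobNorm M = ‖M‖ := by
  rw [frobNorm, Matrix.frobenius_norm_def, Real.sqrt_eq_rpow]
  congr 1
  refine Finset.sum_congr rfl fun i _ => Finset.sum_congr rfl fun j _ => ?_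
  rw [Real.rpow_two, Real.norm_eq_abs, sq_abs]

lemma row_bound {u : ℕ} (X : Matrix (Fin u) (Fin u) ℝ)
    (h : (1 - X * Xᵀ).PosSemidef) (v : Fin u → ℝ) :
    ∑ k, (∑ j, v j * X j k) ^ 2 ≤ ∑ j, v j ^ 2 := by
  have h2 := h.dotProduct_mulVec_nonneg v
  have key : v ⬝ᵥ ((X * Xᵀ) *ᵥ v) = (Xᵀ *ᵥ v) ⬝ᵥ (Xᵀ *ᵥ v) := by
    rw [← mulVec_mulVec, dotProduct_mulVec, ← mulVec_transpose]
  simp only [star_trivial, sub_mulVec, dotProduct_sub, one_mulVec, key] at h2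
  have e1 : v ⬝ᵥ v = ∑ j, v j ^ 2 := by
    simp [dotProduct, sq]
  have e2 : (Xᵀ *ᵥ v) ⬝ᵥ (Xᵀ *ᵥ v) = ∑ k, (∑ j, v j * X j k) ^ 2 := by
    simp [dotProduct, mulVec, sq, mul_comm]
  rw [e1, e2] at h2
  linarith

/-- If `1 - X Xᵀ` is PSD then right-multiplication by `X` contracts the Frobenius norm. -/
lemma mul_contract {a u : ℕ} (M : Matrix (Fin a) (Fin u) ℝ) (X : Matrix (Fin u) (Fin u) ℝ)
    (h : (1 - X * Xᵀ).PosSemidef) : ‖M * X‖ ≤ ‖M‖ := by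
  rw [← frobNorm_eq, ← frobNorm_eq]
  apply Real.sqrt_le_sqrt
  apply Finset.sum_le_sum
  intro i _
  simpa [Matrix.mul_apply] using row_bound X h (M i)

lemma psd_fact {m u : ℕ} (A : Matrix (Fin m) (Fin u) ℝ) :
    (1 - (1 + Aᵀ * A)⁻¹ * ((1 + Aᵀ * A)⁻¹)ᵀ).PosSemidef := by
  set P := Aᵀ * A with hPdef
  have hP : P.PosSemidef := by
    have := Matrix.posSemidef_conjTranspose_mul_self A
    rwa [conjTranspose_eq_transpose_of_trivial] at this
  set S := 1 + P with hSdef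
  have hS : S.PosDef := Matrix.PosDef.add_posSemidef Matrix.PosDef.one hP
  have hX : S⁻¹.PosSemidef := hS.posSemidef.inv
  have hXt : (S⁻¹)ᵀ = S⁻¹ := by
    have h : (S⁻¹)ᴴ = S⁻¹ := hX.isHermitian
    rwa [conjTranspose_eq_transpose_of_trivial] at h
  have hdet : IsUnit S.det := hS.det_pos.ne'.isUnit
  have hSX : S * S⁻¹ = 1 := Matrix.mul_nonsing_inv S hdet
  have hXS : S⁻¹ * S = 1 := Matrix.nonsing_inv_mul S hdet
  have hQ : (S * S - 1).PosSemidef := by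
    have : S * S - 1 = (P + P) + P * P := by
      rw [hSdef]; noncomm_ring
    rw [this]
    refine (hP.add hP).add ?_
    have h2 := Matrix.posSemidef_conjTranspose_mul_self P
    have hPh : Pᴴ = P := by
      have := hP.isHermitian; exact this
    rwa [hPh] at h2
  have key : S⁻¹ * (S * S - 1) * S⁻¹ = 1 - S⁻¹ * S⁻¹ := by
    have : S⁻¹ * (S * S - 1) * S⁻¹ = (S⁻¹ * S) * (S * S⁻¹) - S⁻¹ * S⁻¹ := by
      noncomm_ring
    rw [this, hXS, hSX, one_mul]
  have conj := hQ.conjTranspose_mul_mul_same S⁻¹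
  rw [conjTranspose_eq_transpose_of_trivial, hXt, key] at conj
  rw [hXt]
  exact conj

theorem stmt12 (m u : ℕ) (hm : 1 ≤ m) (hu : 1 ≤ u) :
    (∀ A U : Matrix (Fin m) (Fin u) ℝ,
      frobNorm ((2 : ℝ) • (U * (1 + Aᵀ * A)⁻¹) -
          (2 : ℝ) • (A * (1 + Aᵀ * A)⁻¹ * (Aᵀ * U + Uᵀ * A) * (1 + Aᵀ * A)⁻¹)) ≤
        (2 + 4 * frobNorm A ^ 2) * frobNorm U) ∧
    -- in particular, the Hessian of `g` at `A`, as a linear map in `U` with respect to the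
    -- Frobenius norm, has operator norm at most `2 + 4 ‖A‖_F²`
    (∀ A U : Matrix (Fin m) (Fin u) ℝ, frobNorm U ≤ 1 →
      frobNorm ((2 : ℝ) • (U * (1 + Aᵀ * A)⁻¹) -
          (2 : ℝ) • (A * (1 + Aᵀ * A)⁻¹ * (Aᵀ * U + Uᵀ * A) * (1 + Aᵀ * A)⁻¹)) ≤
        2 + 4 * frobNorm A ^ 2) := by
  have main : ∀ A U : Matrix (Fin m) (Fin u) ℝ,
      frobNorm ((2 : ℝ) • (U * (1 + Aᵀ * A)⁻¹) -
          (2 : ℝ) • (A * (1 + Aᵀ * A)⁻¹ * (Aᵀ * U + Uᵀ * A) * (1 + Aᵀ * A)⁻¹)) ≤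
        (2 + 4 * frobNorm A ^ 2) * frobNorm U := by
    intro A U
    set X := (1 + Aᵀ * A)⁻¹ with hXdef
    set W := Aᵀ * U + Uᵀ * A with hWdef
    have hpsd := psd_fact A
    have hXt : Xᵀ = X := by
      have hP : (Aᵀ * A).PosSemidef := by
        have := Matrix.posSemidef_conjTranspose_mul_self A
        rwa [conjTranspose_eq_transpose_of_trivial] at this
      have hS : (1 + Aᵀ * A).PosDef := Matrix.PosDef.add_posSemidef Matrix.PosDef.one hP
      have h : ((1 + Aᵀ * A)⁻¹)ᴴ = (1 + Aᵀ * A)⁻¹ := hS.posSemidef.inv.isHermitian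
      rwa [conjTranspose_eq_transpose_of_trivial] at h
    simp only [frobNorm_eq]
    have h1 : ‖U * X‖ ≤ ‖U‖ := mul_contract U X hpsd
    have hW : ‖W‖ ≤ 2 * ‖A‖ * ‖U‖ := by
      calc ‖W‖ ≤ ‖Aᵀ * U‖ + ‖Uᵀ * A‖ := norm_add_le _ _
        _ ≤ ‖Aᵀ‖ * ‖U‖ + ‖Uᵀ‖ * ‖A‖ :=
            add_le_add (Matrix.frobenius_norm_mul _ _) (Matrix.frobenius_norm_mul _ _)
        _ = 2 * ‖A‖ * ‖U‖ := by
            rw [Matrix.frobenius_norm_transpose, Matrix.frobenius_norm_transpose]; ring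
    have hXW : ‖X * W‖ ≤ ‖W‖ := by
      calc ‖X * W‖ = ‖(X * W)ᵀ‖ := (Matrix.frobenius_norm_transpose _).symm
        _ = ‖Wᵀ * X‖ := by rw [transpose_mul, hXt]
        _ ≤ ‖Wᵀ‖ := mul_contract Wᵀ X hpsd
        _ = ‖W‖ := Matrix.frobenius_norm_transpose _
    have h2 : ‖A * X * W * X‖ ≤ 2 * ‖A‖ ^ 2 * ‖U‖ := by
      calc ‖A * X * W * X‖ ≤ ‖A * X * W‖ := mul_contract _ X hpsd
        _ = ‖A * (X * W)‖ := by rw [Matrix.mul_assoc]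
        _ ≤ ‖A‖ * ‖X * W‖ := Matrix.frobenius_norm_mul _ _
        _ ≤ ‖A‖ * ‖W‖ := by
            exact mul_le_mul_of_nonneg_left hXW (norm_nonneg _)
        _ ≤ ‖A‖ * (2 * ‖A‖ * ‖U‖) := by
            exact mul_le_mul_of_nonneg_left hW (norm_nonneg _)
        _ = 2 * ‖A‖ ^ 2 * ‖U‖ := by ring
    calc ‖(2:ℝ) • (U * X) - (2:ℝ) • (A * X * W * X)‖
        ≤ ‖(2:ℝ) • (U * X)‖ + ‖(2:ℝ) • (A * X * W * X)‖ := norm_sub_le _ _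
      _ = 2 * ‖U * X‖ + 2 * ‖A * X * W * X‖ := by
          rw [norm_smul, norm_smul]; simp
      _ ≤ 2 * ‖U‖ + 2 * (2 * ‖A‖ ^ 2 * ‖U‖) := by
          have := norm_nonneg (U * X)
          nlinarith
      _ = (2 + 4 * ‖A‖ ^ 2) * ‖U‖ := by ring
  refine ⟨main, fun A U hU => ?_⟩
  calc frobNorm _ ≤ (2 + 4 * frobNorm A ^ 2) * frobNorm U := main A U
    _ ≤ (2 + 4 * frobNorm A ^ 2) * 1 := by
        apply mul_le_mul_of_nonneg_left hU
        positivity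
    _ = 2 + 4 * frobNorm A ^ 2 := mul_one _
end
end

section
/- Let d ≥ 1, n, δ, M₁, δ̄ > 0, and let ℓ : ℝ^d → ℝ be three times continuously differentiable on the closed ball B̄(x̄, δ̄) := {x : ‖x − x̄‖ ≤ δ̄}, with ∇ℓ(x̄) = 0. Suppose −∇²ℓ(x) ⪰ nδ I_d and ‖ℓ'''(x)‖* ≤ n M₁ for every x ∈ B̄(x̄, δ̄). Then for every ρ ∈ (0, δ̄] and every x with ρ ≤ ‖x − x̄‖ ≤ δ̄, (ℓ(x) − ℓ(x̄))/n ≤ −min{ (δ/2)ρ² − (M₁/6)ρ³, (δ/2)δ̄² − (M₁/6)δ̄³ }. In particular, the right-hand side is strictly negative whenever δ̄ < 3δ/M₁. -/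
set_option maxHeartbeats 1000000

open Metric Set InnerProductSpace

theorem stmt16 (d : ℕ) (hd : 1 ≤ d) (n δ M₁ dbar : ℝ)
    (hn : 0 < n) (hδ : 0 < δ) (hM₁ : 0 < M₁) (hdbar : 0 < dbar)
    (ℓ : EuclideanSpace ℝ (Fin d) → ℝ) (xbar : EuclideanSpace ℝ (Fin d))
    (hC3 : ContDiffOn ℝ 3 ℓ (Metric.closedBall xbar dbar))
    (hgrad : gradient ℓ xbar = 0)
    (hcurv : ∀ x ∈ Metric.closedBall xbar dbar, ∀ v : EuclideanSpace ℝ (Fin d),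
      (inner ℝ v ((fderiv ℝ (gradient ℓ) x) v) : ℝ) ≤ -(n * δ * ‖v‖ ^ 2))
    (h3 : ∀ x ∈ Metric.closedBall xbar dbar, ‖iteratedFDeriv ℝ 3 ℓ x‖ ≤ n * M₁) :
    ∀ ρ : ℝ, 0 < ρ → ρ ≤ dbar →
      (∀ x : EuclideanSpace ℝ (Fin d), ρ ≤ ‖x - xbar‖ → ‖x - xbar‖ ≤ dbar →
        (ℓ x - ℓ xbar) / n ≤
          -min (δ / 2 * ρ ^ 2 - M₁ / 6 * ρ ^ 3) (δ / 2 * dbar ^ 2 - M₁ / 6 * dbar ^ 3)) ∧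
      (dbar < 3 * δ / M₁ →
        -min (δ / 2 * ρ ^ 2 - M₁ / 6 * ρ ^ 3) (δ / 2 * dbar ^ 2 - M₁ / 6 * dbar ^ 3) < 0) := by
  intro ρ hρ hρd
  constructor
  · intro x hρx hxd
    set u : EuclideanSpace ℝ (Fin d) := x - xbar with hu
    set r : ℝ := ‖x - xbar‖ with hrdef
    have hr0 : 0 < r := lt_of_lt_of_le hρ hρx
    have hC3b : ContDiffOn ℝ 3 ℓ (ball xbar dbar) := hC3.mono ball_subset_closedBall
    -- differentiability of ℓ on the open ball
    have hldiff : ∀ y ∈ ball xbar dbar, DifferentiableAt ℝ ℓ y := fun y hy =>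
      (hC3b.differentiableOn (by norm_num)).differentiableAt (isOpen_ball.mem_nhds hy)
    -- differentiability of gradient ℓ on the open ball
    have hfd2 : ContDiffOn ℝ 2 (fderiv ℝ ℓ) (ball xbar dbar) :=
      hC3b.fderiv_of_isOpen isOpen_ball (by norm_num)
    have hgdiff : ∀ y ∈ ball xbar dbar, DifferentiableAt ℝ (gradient ℓ) y := by
      intro y hy
      have h1 : DifferentiableAt ℝ (fderiv ℝ ℓ) y :=
        (hfd2.differentiableOn (by norm_num)).differentiableAt (isOpen_ball.mem_nhds hy)
      have h2 : gradient ℓ = fun z => (toDual ℝ (EuclideanSpace ℝ (Fin d))).symm (fderiv ℝ ℓ z) := rfl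
      rw [h2]
      exact ((toDual ℝ (EuclideanSpace ℝ (Fin d))).symm.toContinuousLinearEquiv.differentiable.differentiableAt).comp y h1
    -- fderiv applied = inner with gradient
    have hinner : ∀ (y v : EuclideanSpace ℝ (Fin d)), fderiv ℝ ℓ y v = (inner ℝ (gradient ℓ y) v : ℝ) := by
      intro y v
      rw [show gradient ℓ y = (toDual ℝ (EuclideanSpace ℝ (Fin d))).symm (fderiv ℝ ℓ y) from rfl, toDual_symm_apply]
    -- the path
    set γ : ℝ → EuclideanSpace ℝ (Fin d) := fun t => xbar + t • u with hγ
    have hγd : ∀ t : ℝ, HasDerivAt γ u t := by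
      intro t
      simpa [hγ] using ((hasDerivAt_id t).smul_const u).const_add xbar
    have hγnorm : ∀ t : ℝ, ‖γ t - xbar‖ = |t| * r := by
      intro t
      simp [hγ, norm_smul, hrdef, hu, abs_of_nonneg, add_sub_cancel_left]
    have hγball : ∀ t ∈ Ico (0:ℝ) 1, γ t ∈ ball xbar dbar := by
      intro t ht
      rw [mem_ball_iff_norm, hγnorm, abs_of_nonneg ht.1]
      calc t * r ≤ t * dbar := by
            exact mul_le_mul_of_nonneg_left hxd ht.1
        _ < 1 * dbar := by
            exact mul_lt_mul_of_pos_right ht.2 hdbar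
        _ = dbar := one_mul _
    have hγcball : ∀ t ∈ Icc (0:ℝ) 1, γ t ∈ closedBall xbar dbar := by
      intro t ht
      rw [mem_closedBall_iff_norm, hγnorm, abs_of_nonneg ht.1]
      calc t * r ≤ 1 * dbar := mul_le_mul ht.2 hxd (norm_nonneg _) zero_le_one
        _ = dbar := one_mul _
    -- ψ and its derivative
    set ψ : ℝ → ℝ := fun t => (inner ℝ (gradient ℓ (γ t)) u : ℝ) with hψ
    have hψd : ∀ t ∈ Ico (0:ℝ) 1, HasDerivAt ψ
        ((inner ℝ ((fderiv ℝ (gradient ℓ) (γ t)) u) u : ℝ)) t := by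
      intro t ht
      have hg : HasDerivAt (fun s => gradient ℓ (γ s)) ((fderiv ℝ (gradient ℓ) (γ t)) u) t :=
        ((hgdiff _ (hγball t ht)).hasFDerivAt).comp_hasDerivAt t (hγd t)
      have := (HasDerivAt.inner ℝ hg (hasDerivAt_const t u))
      simpa [hψ] using this
    have hψ0 : ψ 0 = 0 := by
      simp only [hψ, hγ, zero_smul, add_zero, hgrad, inner_zero_left]
    -- ψ t ≤ -(n*δ*r^2) * t on (0,1)
    have hψle : ∀ t ∈ Ico (0:ℝ) 1, ψ t ≤ -(n * δ * r ^ 2) * t := by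
      intro t ht
      have hanti : AntitoneOn (fun s => ψ s + (n * δ * r ^ 2) * s) (Icc 0 t) := by
        apply antitoneOn_of_deriv_nonpos (convex_Icc 0 t)
        · apply ContinuousOn.add
          · intro s hs
            have hs' : s ∈ Ico (0:ℝ) 1 := ⟨hs.1, lt_of_le_of_lt hs.2 ht.2⟩
            exact ((hψd s hs').differentiableAt.continuousAt).continuousWithinAt
          · exact (continuousOn_const.mul continuousOn_id)
        · intro s hs
          rw [interior_Icc] at hs
          have hs' : s ∈ Ico (0:ℝ) 1 := ⟨hs.1.le, lt_of_lt_of_le hs.2 ht.2.le⟩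
          exact ((hψd s hs').add ((hasDerivAt_id s).const_mul (n * δ * r ^ 2))).differentiableAt.differentiableWithinAt
        · intro s hs
          rw [interior_Icc] at hs
          have hs' : s ∈ Ico (0:ℝ) 1 := ⟨hs.1.le, lt_of_lt_of_le hs.2 ht.2.le⟩
          have hd : HasDerivAt (fun s => ψ s + (n * δ * r ^ 2) * s)
              ((inner ℝ ((fderiv ℝ (gradient ℓ) (γ s)) u) u : ℝ) + (n * δ * r ^ 2)) s := by
            have := (hψd s hs').add ((hasDerivAt_id s).const_mul (n * δ * r ^ 2))
            simp only [mul_one, id_eq] at this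
            exact this
          rw [hd.deriv]
          have := hcurv (γ s) (ball_subset_closedBall (hγball s hs')) u
          rw [real_inner_comm] at this
          have hru : ‖u‖ = r := rfl
          rw [hru] at this
          linarith
      have h01 : (0:ℝ) ∈ Icc (0:ℝ) t := ⟨le_refl 0, ht.1⟩
      have h11 : t ∈ Icc (0:ℝ) t := ⟨ht.1, le_refl t⟩
      have := hanti h01 h11 ht.1
      simp only [hψ0, zero_add, mul_zero, add_zero] at this
      -- this : ψ t + n*δ*r^2 * t ≤ 0 + ... check
      linarith
    -- φ and conclusion
    have hφcont : ContinuousOn (fun t => ℓ (γ t)) (Icc (0:ℝ) 1) := by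
      apply (hC3.continuousOn).comp
      · exact (continuous_const.add (continuous_id.smul continuous_const)).continuousOn
      · intro t ht; exact hγcball t ht
    have hφd : ∀ t ∈ Ioo (0:ℝ) 1, HasDerivAt (fun t => ℓ (γ t)) (ψ t) t := by
      intro t ht
      have h1 : HasDerivAt (fun t => ℓ (γ t)) ((fderiv ℝ ℓ (γ t)) u) t :=
        ((hldiff _ (hγball t ⟨ht.1.le, ht.2⟩)).hasFDerivAt).comp_hasDerivAt t (hγd t)
      rw [hinner] at h1
      exact h1
    have hΦanti : AntitoneOn (fun t => ℓ (γ t) + (n * δ * r ^ 2) / 2 * t ^ 2) (Icc 0 1) := by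
      apply antitoneOn_of_deriv_nonpos (convex_Icc 0 1)
      · exact hφcont.add (continuousOn_const.mul (continuousOn_pow 2))
      · intro s hs
        rw [interior_Icc] at hs
        exact ((hφd s hs).add (((hasDerivAt_pow 2 s)).const_mul ((n * δ * r ^ 2) / 2))).differentiableAt.differentiableWithinAt
      · intro s hs
        rw [interior_Icc] at hs
        have hd : HasDerivAt (fun t => ℓ (γ t) + (n * δ * r ^ 2) / 2 * t ^ 2)
            (ψ s + (n * δ * r ^ 2) / 2 * (2 * s ^ 1)) s :=
          (hφd s hs).add (((hasDerivAt_pow 2 s)).const_mul ((n * δ * r ^ 2) / 2))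
        rw [hd.deriv]
        have := hψle s ⟨hs.1.le, hs.2⟩
        ring_nf
        ring_nf at this
        nlinarith [this]
    have hkey : ℓ x - ℓ xbar ≤ -(n * δ * r ^ 2) / 2 := by
      have h0m : (0:ℝ) ∈ Icc (0:ℝ) 1 := ⟨le_refl 0, zero_le_one⟩
      have h1m : (1:ℝ) ∈ Icc (0:ℝ) 1 := ⟨zero_le_one, le_refl 1⟩
      have h := hΦanti h0m h1m zero_le_one
      have hγ0 : γ 0 = xbar := by simp [hγ]
      have hγ1 : γ 1 = x := by simp [hγ, hu]
      simp only [hγ0, hγ1, one_pow, mul_one] at h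
      norm_num at h
      linarith
    -- conclude
    have hρr : ρ ^ 2 ≤ r ^ 2 := by nlinarith
    have hmin : min (δ / 2 * ρ ^ 2 - M₁ / 6 * ρ ^ 3) (δ / 2 * dbar ^ 2 - M₁ / 6 * dbar ^ 3)
        ≤ δ / 2 * r ^ 2 := by
      refine le_trans (min_le_left _ _) ?_
      nlinarith [pow_pos hρ 3]
    rw [div_le_iff₀ hn]
    nlinarith [mul_le_mul_of_nonneg_left hmin hn.le]
  · intro hlt
    have h1 : M₁ * dbar < 3 * δ := by
      rw [lt_div_iff₀ hM₁] at hlt; linarith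
    have hρM : M₁ * ρ ≤ M₁ * dbar := mul_le_mul_of_nonneg_left hρd hM₁.le
    have h2 : 0 < δ / 2 * ρ ^ 2 - M₁ / 6 * ρ ^ 3 := by nlinarith [mul_pos hρ hρ]
    have h3 : 0 < δ / 2 * dbar ^ 2 - M₁ / 6 * dbar ^ 3 := by nlinarith [mul_pos hdbar hdbar]
    have := lt_min h2 h3
    linarith
end
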